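/- arXiv:1207.5548 — 2 statements merged into one kernel-verified Lean document; each statement's English description precedes it below -/
import Mathlib

section
/- For every real α ≠ 0, every natural number n and every real y, one has (yα)_n = ∑_{k=0}^{n} α^k·S(n,k;α)·(y)_k; that is, the generalized factorial coefficient C(n,k;α) defined by (yα)_n = ∑_k C(n,k;α)(y)_k equals α^k·S(n,k;α). -/
/-- Rising factorial `(x)_n = x(x+1)⋯(x+n−1)`. -/
noncomputable def risingFac (x : ℝ) (n : ℕ) : ℝ := ∏ i ∈ Finset.range n, (x + i)

/-- Rising factorial with increment `α`: `(x)_{n↑α} = ∏_{i<n} (x + iα)`. -/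
noncomputable def risingFacInc (x α : ℝ) (n : ℕ) : ℝ := ∏ i ∈ Finset.range n, (x + i * α)

/-- Falling factorial `(x)_{[n]} = x(x−1)⋯(x−n+1)`. -/
noncomputable def fallingFac (x : ℝ) (n : ℕ) : ℝ := ∏ i ∈ Finset.range n, (x - i)

/-- Compositions of `n` into `k` positive parts, as functions `Fin k → ℕ`. -/
def compositions (n k : ℕ) : Finset (Fin k → ℕ) :=
  (Fintype.piFinset fun _ => Finset.range (n + 1)).filter
    (fun f => (∀ i, 0 < f i) ∧ ∑ i, f i = n)

/-- Tuples of `k` nonnegative integers summing to `n`. -/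
def weakCompositions (n k : ℕ) : Finset (Fin k → ℕ) :=
  (Fintype.piFinset fun _ => Finset.range (n + 1)).filter (fun f => ∑ i, f i = n)

/-- Generalized (central) Stirling number
`S(n,k;α) = (n!/k!) ∑_{(n_1,…,n_k)} ∏_j (1−α)_{n_j−1}/n_j!`,
the sum over compositions of `n` into `k` positive parts. -/
noncomputable def genStirling (α : ℝ) (n k : ℕ) : ℝ :=
  (Nat.factorial n : ℝ) / (Nat.factorial k : ℝ) *
    ∑ f ∈ compositions n k, ∏ j, risingFac (1 - α) (f j - 1) / (Nat.factorial (f j) : ℝ)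

/-- Non-central generalized Stirling number
`S(n,k;α,γ) = ∑_{s=k}^n C(n,s) S(s,k;α) (−γ)_{n−s}`. -/
noncomputable def genStirlingNC (α γ : ℝ) (n k : ℕ) : ℝ :=
  ∑ s ∈ Finset.Icc k n, (n.choose s : ℝ) * genStirling α s k * risingFac (-γ) (n - s)

open Finset

/-! ### Auxiliary material -/

/-- `B(n,k) = ∑_{compositions} ∏_j binom(α, n_j)`. -/
noncomputable def Bcomp (α : ℝ) (n k : ℕ) : ℝ :=
  ∑ f ∈ compositions n k, ∏ j, Ring.choose α (f j)

lemma fallingFac_succ (x : ℝ) (n : ℕ) : fallingFac x (n + 1) = fallingFac x n * (x - n) := by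
  simp [fallingFac, Finset.prod_range_succ]

lemma smeval_descPochhammer_real (x : ℝ) (n : ℕ) :
    (descPochhammer ℤ n).smeval x = fallingFac x n := by
  induction n with
  | zero => simp [fallingFac, descPochhammer_zero, Polynomial.smeval_one]
  | succ n ih =>
    rw [descPochhammer_succ_right, Polynomial.smeval_mul, ih, fallingFac_succ,
      Polynomial.smeval_sub, Polynomial.smeval_X, Polynomial.smeval_natCast]
    push_cast
    ring

lemma factorial_mul_ringChoose (x : ℝ) (k : ℕ) :
    (k.factorial : ℝ) * Ring.choose x k = fallingFac x k := by
  rw [← smeval_descPochhammer_real, Ring.descPochhammer_eq_factorial_smul_choose, nsmul_eq_mul]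

lemma ringChoose_eq (x : ℝ) (k : ℕ) :
    Ring.choose x k = fallingFac x k / (k.factorial : ℝ) := by
  rw [eq_div_iff (by exact_mod_cast k.factorial_ne_zero), mul_comm, factorial_mul_ringChoose]

lemma choose_add_eq_range (x y : ℝ) (n : ℕ) :
    Ring.choose (x + y) n = ∑ i ∈ range (n + 1), Ring.choose x i * Ring.choose y (n - i) := by
  rw [Ring.add_choose_eq n (Commute.all x y), Finset.Nat.sum_antidiagonal_eq_sum_range_succ_mk]

lemma mem_compositions' {n k : ℕ} {f : Fin k → ℕ} :
    f ∈ compositions n k ↔ (∀ i, 0 < f i) ∧ ∑ i, f i = n := by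
  simp only [compositions, Finset.mem_filter, Fintype.mem_piFinset, Finset.mem_range,
    Nat.lt_succ_iff, and_iff_right_iff_imp]
  rintro ⟨h1, h2⟩ i
  exact h2 ▸ Finset.single_le_sum (fun j _ => Nat.zero_le _) (Finset.mem_univ i)

lemma compositions_eq_empty {n k : ℕ} (h : n < k) : compositions n k = ∅ := by
  ext f
  simp only [Finset.notMem_empty, iff_false, mem_compositions', not_and]
  intro h1 h2
  have hk : k ≤ n := by
    calc k = ∑ _i : Fin k, 1 := by simp
    _ ≤ ∑ i, f i := Finset.sum_le_sum fun i _ => h1 i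
    _ = n := h2
  omega

lemma Bcomp_eq_zero {α : ℝ} {n k : ℕ} (h : n < k) : Bcomp α n k = 0 := by
  rw [Bcomp, compositions_eq_empty h, Finset.sum_empty]

lemma Bcomp_zero_zero (α : ℝ) : Bcomp α 0 0 = 1 := by
  have h : compositions 0 0 = Finset.univ := by
    apply Finset.eq_univ_of_forall
    intro f
    rw [mem_compositions']
    exact ⟨fun i => i.elim0, by simp⟩
  rw [Bcomp, h]
  simp

lemma Bcomp_pos_zero {α : ℝ} {n : ℕ} (h : 0 < n) : Bcomp α n 0 = 0 := by
  have h0 : compositions n 0 = ∅ := by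
    ext f
    simp only [Finset.notMem_empty, iff_false, mem_compositions', not_and]
    intro _
    simp
    omega
  rw [Bcomp, h0, Finset.sum_empty]

/-- Peeling off the first part of a composition. -/
lemma Bcomp_succ (α : ℝ) (n k : ℕ) :
    Bcomp α n (k + 1) = ∑ j ∈ Finset.Icc 1 n, Ring.choose α j * Bcomp α (n - j) k := by
  simp only [Bcomp, Finset.mul_sum]
  rw [Finset.sum_sigma']
  refine (Finset.sum_bij' (fun (f : Fin (k + 1) → ℕ) _ => (⟨f 0, Fin.tail f⟩ : Σ _j : ℕ, Fin k → ℕ))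
    (fun p _ => Fin.cons p.1 p.2) ?_ ?_ ?_ ?_ ?_)
  · intro f hf
    rw [mem_compositions'] at hf
    obtain ⟨h1, h2⟩ := hf
    simp only [Finset.mem_sigma, Finset.mem_Icc, mem_compositions']
    have hle : f 0 ≤ n := h2 ▸ Finset.single_le_sum (fun j _ => Nat.zero_le _) (Finset.mem_univ 0)
    refine ⟨⟨h1 0, hle⟩, fun i => h1 _, ?_⟩
    have hsum := Fin.sum_univ_succ f
    rw [h2] at hsum
    simp only [Fin.tail]
    omega
  · rintro ⟨j, g⟩ hp
    simp only [Finset.mem_sigma, Finset.mem_Icc, mem_compositions'] at hp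
    obtain ⟨⟨hj1, hjn⟩, hg1, hg2⟩ := hp
    rw [mem_compositions']
    constructor
    · intro i
      refine Fin.cases ?_ ?_ i
      · simpa using Nat.lt_of_lt_of_le Nat.zero_lt_one hj1
      · intro i'; simpa using hg1 i'
    · rw [Fin.sum_univ_succ]
      simp only [Fin.cons_zero, Fin.cons_succ]
      rw [hg2]
      omega
  · intro f hf
    exact Fin.cons_self_tail f
  · rintro ⟨j, g⟩ hp
    simp [Fin.tail_cons]
  · intro f hf
    rw [Fin.prod_univ_succ]
    simp only [Fin.tail]

lemma sum_Bcomp_ext (α : ℝ) (m i N : ℕ) (hN : i + 1 ≤ N) :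
    ∑ k ∈ range N, (m.choose k : ℝ) * Bcomp α i k
      = ∑ k ∈ range (i + 1), (m.choose k : ℝ) * Bcomp α i k := by
  refine (Finset.sum_subset (Finset.range_subset_range.2 hN) ?_).symm
  intro k _ hk
  rw [Finset.mem_range, not_lt] at hk
  rw [Bcomp_eq_zero (by omega), mul_zero]

/-- Main identity for natural multiples. -/
lemma step1 (m : ℕ) (α : ℝ) : ∀ n : ℕ,
    Ring.choose ((m : ℝ) * α) n = ∑ k ∈ range (n + 1), (m.choose k : ℝ) * Bcomp α n k := by
  induction m with
  | zero =>
    intro n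
    simp only [Nat.cast_zero, zero_mul]
    rw [show ((0 : ℝ)) = ((0 : ℕ) : ℝ) by norm_cast, Ring.choose_natCast]
    rcases n with _ | n
    · simp [Bcomp_zero_zero]
    · rw [Nat.choose_eq_zero_of_lt (Nat.succ_pos n), Finset.sum_eq_zero]
      · simp
      · intro k hk
        rcases Nat.eq_zero_or_pos k with rfl | hk'
        · rw [Bcomp_pos_zero (Nat.succ_pos n), mul_zero]
        · rw [Nat.choose_eq_zero_of_lt hk']
          simp
  | succ m ih =>
    intro n
    have key : (((m + 1 : ℕ)) : ℝ) * α = (m : ℝ) * α + α := by push_cast; ring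
    have pascal : ∑ k ∈ range (n + 1), (((m + 1).choose k : ℕ) : ℝ) * Bcomp α n k
        = (∑ k ∈ range (n + 1), (m.choose k : ℝ) * Bcomp α n k)
          + ∑ k ∈ range n, (m.choose k : ℝ) * Bcomp α n (k + 1) := by
      rw [Finset.sum_range_succ' (fun k => (((m + 1).choose k : ℕ) : ℝ) * Bcomp α n k) n,
        Finset.sum_range_succ' (fun k => ((m.choose k : ℕ) : ℝ) * Bcomp α n k) n]
      simp only [Nat.choose_succ_succ, Nat.cast_add, Nat.choose_zero_right, Nat.cast_one, add_mul]
      rw [Finset.sum_add_distrib]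
      ring
    have s2 : ∑ k ∈ range n, (m.choose k : ℝ) * Bcomp α n (k + 1)
        = ∑ i ∈ range n, Ring.choose ((m : ℝ) * α) i * Ring.choose α (n - i) := by
      simp only [Bcomp_succ, Finset.mul_sum]
      rw [Finset.sum_comm]
      refine Finset.sum_nbij' (fun j => n - j) (fun i => n - i) ?_ ?_ ?_ ?_ ?_
      · intro j hj
        rw [Finset.mem_Icc] at hj
        rw [Finset.mem_range]
        omega
      · intro i hi
        rw [Finset.mem_range] at hi
        rw [Finset.mem_Icc]
        omega
      · intro j hj
        rw [Finset.mem_Icc] at hj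
        omega
      · intro i hi
        rw [Finset.mem_range] at hi
        omega
      · intro j hj
        rw [Finset.mem_Icc] at hj
        have hsub : n - (n - j) = j := by omega
        rw [hsub]
        have hext := sum_Bcomp_ext α m (n - j) n (by omega)
        calc ∑ k ∈ range n, (m.choose k : ℝ) * (Ring.choose α j * Bcomp α (n - j) k)
            = Ring.choose α j * ∑ k ∈ range n, (m.choose k : ℝ) * Bcomp α (n - j) k := by
              rw [Finset.mul_sum]; exact Finset.sum_congr rfl fun k _ => by ring
          _ = Ring.choose α j * Ring.choose ((m : ℝ) * α) (n - j) := by rw [hext, ← ih (n - j)]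
          _ = Ring.choose ((m : ℝ) * α) (n - j) * Ring.choose α j := mul_comm _ _
    rw [key, choose_add_eq_range, Finset.sum_range_succ, pascal, ← s2, Nat.sub_self,
      Ring.choose_zero_right, mul_one, ih n]
    ring

/-- Main identity, real version, binomial-coefficient form. -/
lemma main_choose (α z : ℝ) (n : ℕ) :
    Ring.choose (z * α) n = ∑ k ∈ range (n + 1), Ring.choose z k * Bcomp α n k := by
  classical
  set P : Polynomial ℝ :=
    Polynomial.C ((n.factorial : ℝ)⁻¹) *
      ∏ i ∈ range n, (Polynomial.C α * Polynomial.X - Polynomial.C (i : ℝ)) with hPdef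
  set Q : Polynomial ℝ :=
    ∑ k ∈ range (n + 1), Polynomial.C (Bcomp α n k * ((k.factorial : ℝ))⁻¹) *
      ∏ i ∈ range k, (Polynomial.X - Polynomial.C (i : ℝ)) with hQdef
  have hP : ∀ x : ℝ, P.eval x = Ring.choose (x * α) n := by
    intro x
    have hprod : ∏ i ∈ range n, (α * x - (i : ℝ)) = fallingFac (x * α) n := by
      simp only [fallingFac]
      exact Finset.prod_congr rfl fun i _ => by ring
    rw [hPdef]
    simp only [Polynomial.eval_mul, Polynomial.eval_C, Polynomial.eval_prod,
      Polynomial.eval_sub, Polynomial.eval_X]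
    rw [ringChoose_eq, ← hprod]
    ring
  have hQ : ∀ x : ℝ, Q.eval x = ∑ k ∈ range (n + 1), Ring.choose x k * Bcomp α n k := by
    intro x
    rw [hQdef, Polynomial.eval_finset_sum]
    refine Finset.sum_congr rfl fun k _ => ?_
    simp only [Polynomial.eval_mul, Polynomial.eval_C, Polynomial.eval_prod,
      Polynomial.eval_sub, Polynomial.eval_X]
    rw [ringChoose_eq]
    simp only [fallingFac]
    ring
  have hPQ : P = Q := by
    apply Polynomial.eq_of_infinite_eval_eq
    apply Set.Infinite.mono _ (Set.infinite_range_of_injective (Nat.cast_injective (R := ℝ)))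
    rintro _ ⟨m, rfl⟩
    simp only [Set.mem_setOf_eq]
    rw [hP, hQ, step1 m α n]
    refine Finset.sum_congr rfl fun k _ => ?_
    rw [Ring.choose_natCast]
  rw [← hP z, ← hQ z, hPQ]

/-! ### Sign bookkeeping -/

lemma risingFac_eq_neg_fallingFac (x : ℝ) (n : ℕ) :
    risingFac x n = (-1) ^ n * fallingFac (-x) n := by
  simp only [risingFac, fallingFac]
  calc ∏ i ∈ range n, (x + (i : ℝ))
      = ∏ i ∈ range n, (-1 : ℝ) * (-x - (i : ℝ)) := Finset.prod_congr rfl fun i _ => by ring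
    _ = (-1) ^ n * ∏ i ∈ range n, (-x - (i : ℝ)) := by
        rw [Finset.prod_mul_distrib, Finset.prod_const, Finset.card_range]

lemma fallingFac_eq_rising (α : ℝ) (m : ℕ) :
    fallingFac α (m + 1) = (-1) ^ m * (α * risingFac (1 - α) m) := by
  simp only [fallingFac, risingFac]
  rw [Finset.prod_range_succ']
  have h : ∏ i ∈ range m, (α - ((i + 1 : ℕ) : ℝ)) = ∏ i ∈ range m, (-1) * ((1 - α) + i) :=
    Finset.prod_congr rfl fun i _ => by push_cast; ring
  rw [h, Finset.prod_mul_distrib, Finset.prod_const, Finset.card_range]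
  push_cast
  ring

lemma term_eq {α : ℝ} {n k : ℕ} {f : Fin k → ℕ} (hf : f ∈ compositions n k) :
    α ^ k * ∏ j, risingFac (1 - α) (f j - 1) / (Nat.factorial (f j) : ℝ)
      = (-1) ^ (n - k) * ∏ j, Ring.choose α (f j) := by
  obtain ⟨hpos, hsum⟩ := mem_compositions'.1 hf
  have hαpow : α ^ k = ∏ _j : Fin k, α := by simp
  rw [hαpow, ← Finset.prod_mul_distrib]
  have key : ∀ j : Fin k, α * (risingFac (1 - α) (f j - 1) / ((f j).factorial : ℝ))
      = (-1 : ℝ) ^ (f j - 1) * Ring.choose α (f j) := by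
    intro j
    obtain ⟨m, hm⟩ := Nat.exists_eq_succ_of_ne_zero (hpos j).ne'
    rw [hm]
    simp only [Nat.succ_sub_one]
    rw [ringChoose_eq, fallingFac_eq_rising]
    have h1 : (-1 : ℝ) ^ m * (-1 : ℝ) ^ m = 1 := by
      rw [← mul_pow]; norm_num
    have h2 : (-1 : ℝ) ^ m * ((-1 : ℝ) ^ m * (α * risingFac (1 - α) m) / ((m + 1).factorial : ℝ))
        = ((-1 : ℝ) ^ m * (-1 : ℝ) ^ m) * (α * risingFac (1 - α) m) / ((m + 1).factorial : ℝ) := by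
      ring
    rw [h2, h1, one_mul, mul_div_assoc]
  calc ∏ j, α * (risingFac (1 - α) (f j - 1) / ((f j).factorial : ℝ))
      = ∏ j, ((-1 : ℝ) ^ (f j - 1) * Ring.choose α (f j)) :=
        Finset.prod_congr rfl fun j _ => key j
    _ = (∏ j, (-1 : ℝ) ^ (f j - 1)) * ∏ j, Ring.choose α (f j) := Finset.prod_mul_distrib
    _ = (-1) ^ (n - k) * ∏ j, Ring.choose α (f j) := by
        rw [Finset.prod_pow_eq_pow_sum]
        have hs : (∑ j, (f j - 1)) + k = n := by
          have h3 : ∀ j : Fin k, f j - 1 + 1 = f j := fun j => Nat.succ_pred_eq_of_pos (hpos j)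
          calc (∑ j, (f j - 1)) + k = ∑ j : Fin k, (f j - 1 + 1) := by
                rw [Finset.sum_add_distrib]
                simp
            _ = ∑ j, f j := Finset.sum_congr rfl fun j _ => h3 j
            _ = n := hsum
        rw [show (∑ j, (f j - 1)) = n - k by omega]

lemma genStirling_eq (α : ℝ) (n k : ℕ) :
    α ^ k * genStirling α n k
      = (-1) ^ (n - k) * ((n.factorial : ℝ) / (k.factorial : ℝ)) * Bcomp α n k := by
  have hcong : ∑ f ∈ compositions n k,
        α ^ k * ∏ j, risingFac (1 - α) (f j - 1) / (Nat.factorial (f j) : ℝ)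
      = ∑ f ∈ compositions n k, (-1 : ℝ) ^ (n - k) * ∏ j, Ring.choose α (f j) :=
    Finset.sum_congr rfl fun f hf => term_eq hf
  rw [genStirling, Bcomp, mul_left_comm, Finset.mul_sum, hcong, ← Finset.mul_sum]
  ring

/-- For `α ≠ 0`, `(yα)_n = ∑_k α^k S(n,k;α) (y)_k`; i.e. the generalized factorial
coefficient `C(n,k;α)` equals `α^k S(n,k;α)`. -/
theorem rising_mul_eq_sum_pow_genStirling (α : ℝ) (hα : α ≠ 0) (n : ℕ) (y : ℝ) :
    risingFac (y * α) n =
      ∑ k ∈ Finset.range (n + 1), α ^ k * genStirling α n k * risingFac y k := by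
  have hterm : ∀ k ∈ range (n + 1), α ^ k * genStirling α n k * risingFac y k
      = (-1 : ℝ) ^ n *
        ((n.factorial : ℝ) * (Ring.choose (-y) k * Bcomp α n k)) := by
    intro k hk
    rw [Finset.mem_range, Nat.lt_succ_iff] at hk
    rw [genStirling_eq, risingFac_eq_neg_fallingFac, ringChoose_eq]
    have hpow : (-1 : ℝ) ^ (n - k) * (-1 : ℝ) ^ k = (-1 : ℝ) ^ n := by
      rw [← pow_add, Nat.sub_add_cancel hk]
    calc (-1 : ℝ) ^ (n - k) * ((n.factorial : ℝ) / (k.factorial : ℝ)) * Bcomp α n k *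
          ((-1) ^ k * fallingFac (-y) k)
        = ((-1 : ℝ) ^ (n - k) * (-1 : ℝ) ^ k) *
            ((n.factorial : ℝ) * (fallingFac (-y) k / (k.factorial : ℝ) * Bcomp α n k)) := by
          ring
      _ = (-1 : ℝ) ^ n * ((n.factorial : ℝ) * (fallingFac (-y) k / (k.factorial : ℝ) * Bcomp α n k)) := by
          rw [hpow]
  rw [Finset.sum_congr rfl hterm, ← Finset.mul_sum, ← Finset.mul_sum, ← main_choose α (-y) n]
  rw [risingFac_eq_neg_fallingFac, show -(y * α) = -y * α by ring, ← factorial_mul_ringChoose]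
end

section
/- Let p ≥ 1, let z_1,…,z_p be reals, let m_1,…,m_p be positive integers with m = ∑_{j=1}^{p} m_j, and let n be a natural number. Then ∑ (n!/(n_1!⋯n_p!))·∏_{j=1}^{p} (z_j)_{n_j+m_j−1} = [∏_{j=1}^{p} (z_j)_{m_j−1}]·(m + ∑_{j=1}^{p} z_j − p)_n, where the sum ranges over all tuples (n_1,…,n_p) of nonnegative integers with ∑_{j=1}^{p} n_j = n. -/
lemma risingFac_add (x : ℝ) (m k : ℕ) :
    risingFac x (m + k) = risingFac x m * risingFac (x + m) k := by
  rw [risingFac, Finset.prod_range_add, risingFac, risingFac]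
  congr 1
  refine Finset.prod_congr rfl fun i _ => ?_
  push_cast; ring

lemma mem_weakCompositions {n p : ℕ} {f : Fin p → ℕ} :
    f ∈ weakCompositions n p ↔ ∑ j, f j = n := by
  unfold weakCompositions
  simp only [Finset.mem_filter, Fintype.mem_piFinset, Finset.mem_range]
  refine ⟨fun h => h.2, fun h => ⟨fun i => ?_, h⟩⟩
  have : f i ≤ ∑ j, f j := Finset.single_le_sum (fun j _ => Nat.zero_le _) (Finset.mem_univ i)
  omega

lemma risingFac_succ (x : ℝ) (n : ℕ) : risingFac x (n + 1) = risingFac x n * (x + n) := by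
  simp [risingFac, Finset.prod_range_succ]

lemma core (p : ℕ) (a : Fin p → ℝ) (n : ℕ) :
    ∑ f ∈ weakCompositions n p,
      (Nat.factorial n : ℝ) / (∏ j, (Nat.factorial (f j) : ℝ)) * ∏ j, risingFac (a j) (f j)
    = risingFac (∑ j, a j) n := by
  induction n with
  | zero =>
    have h0 : weakCompositions 0 p = {fun _ => 0} := by
      ext f
      simp [mem_weakCompositions, Finset.sum_eq_zero_iff, funext_iff]
    simp [h0, risingFac]
  | succ n ih =>
    have hfac : ∀ k : ℕ, (Nat.factorial k : ℝ) ≠ 0 :=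
      fun k => Nat.cast_ne_zero.mpr (Nat.factorial_ne_zero k)
    set d : Fin p → (Fin p → ℕ) → ℝ := fun i f =>
      (Nat.factorial n : ℝ) * (f i) / (∏ j, (Nat.factorial (f j) : ℝ)) *
        ∏ j, risingFac (a j) (f j) with hd
    have step1 : ∀ f ∈ weakCompositions (n + 1) p,
        (Nat.factorial (n + 1) : ℝ) / (∏ j, (Nat.factorial (f j) : ℝ)) *
          ∏ j, risingFac (a j) (f j) = ∑ i, d i f := by
      intro f hf
      have hsum : ∑ j, f j = n + 1 := mem_weakCompositions.mp hf
      have hc : (∑ i, ((f i : ℝ))) = (n + 1 : ℝ) := by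
        rw [← Nat.cast_sum, hsum]; push_cast; ring
      simp only [hd]
      rw [← Finset.sum_mul, ← Finset.sum_div, ← Finset.mul_sum, hc, Nat.factorial_succ]
      push_cast; ring
    rw [Finset.sum_congr rfl step1, Finset.sum_comm]
    have upd_prod : ∀ (i : Fin p) (F : Fin p → ℕ → ℝ) (h : Fin p → ℕ) (b : ℕ),
        ∏ j, F j (Function.update h i b j) = F i b * ∏ j ∈ Finset.univ.erase i, F j (h j) := by
      intro i F h b
      rw [← Finset.mul_prod_erase Finset.univ _ (Finset.mem_univ i)]
      simp only [Function.update_self]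
      congr 1
      refine Finset.prod_congr rfl fun j hj => ?_
      rw [Function.update_of_ne (Finset.ne_of_mem_erase hj)]
    have upd_sum : ∀ (i : Fin p) (h : Fin p → ℕ) (b : ℕ),
        ∑ j, Function.update h i b j = b + ∑ j ∈ Finset.univ.erase i, h j := by
      intro i h b
      rw [← Finset.add_sum_erase Finset.univ _ (Finset.mem_univ i)]
      simp only [Function.update_self]
      congr 1
      refine Finset.sum_congr rfl fun j hj => ?_
      rw [Function.update_of_ne (Finset.ne_of_mem_erase hj)]
    have sum_split : ∀ (i : Fin p) (h : Fin p → ℕ),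
        ∑ j, h j = h i + ∑ j ∈ Finset.univ.erase i, h j :=
      fun i h => (Finset.add_sum_erase Finset.univ _ (Finset.mem_univ i)).symm
    have step3 : ∀ i : Fin p, ∑ f ∈ weakCompositions (n + 1) p, d i f =
        ∑ g ∈ weakCompositions n p,
          (Nat.factorial n : ℝ) / (∏ j, (Nat.factorial (g j) : ℝ)) *
            (∏ j, risingFac (a j) (g j)) * (a i + g i) := by
      intro i
      have key : ∀ g : Fin p → ℕ, d i (Function.update g i (g i + 1)) =
          (Nat.factorial n : ℝ) / (∏ j, (Nat.factorial (g j) : ℝ)) *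
            (∏ j, risingFac (a j) (g j)) * (a i + g i) := by
        intro g
        simp only [hd]
        rw [upd_prod i (fun j k => (Nat.factorial k : ℝ)),
          upd_prod i (fun j k => risingFac (a j) k),
          Function.update_self, risingFac_succ, Nat.factorial_succ,
          ← Finset.mul_prod_erase Finset.univ (fun j => (Nat.factorial (g j) : ℝ))
            (Finset.mem_univ i),
          ← Finset.mul_prod_erase Finset.univ (fun j => risingFac (a j) (g j))
            (Finset.mem_univ i)]
        have h1 : ((g i : ℝ) + 1) ≠ 0 := by positivity
        have h2 : (Nat.factorial (g i) : ℝ) ≠ 0 := hfac _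
        have h3 : (∏ j ∈ Finset.univ.erase i, (Nat.factorial (g j) : ℝ)) ≠ 0 :=
          Finset.prod_ne_zero_iff.mpr fun j _ => hfac _
        push_cast
        field_simp
      have hne : ∀ f ∈ weakCompositions (n + 1) p, d i f ≠ 0 → 0 < f i := by
        intro f _ h
        by_contra hc
        have h0 : f i = 0 := by omega
        exact h (by simp [hd, h0])
      rw [← Finset.sum_filter_of_ne hne]
      refine Finset.sum_nbij' (i := fun f => Function.update f i (f i - 1))
        (j := fun g => Function.update g i (g i + 1)) ?_ ?_ ?_ ?_ ?_
      · intro f hf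
        simp only [Finset.mem_filter, mem_weakCompositions] at hf
        rw [mem_weakCompositions, upd_sum]
        have := sum_split i f
        omega
      · intro g hg
        rw [mem_weakCompositions] at hg
        simp only [Finset.mem_filter, mem_weakCompositions]
        refine ⟨?_, by simp⟩
        rw [upd_sum]
        have := sum_split i g
        omega
      · intro f hf
        simp only [Finset.mem_filter] at hf
        funext j
        rcases eq_or_ne j i with rfl | hji
        · simp; omega
        · simp [Function.update_of_ne hji]
      · intro g _
        funext j
        rcases eq_or_ne j i with rfl | hji
        · simp
        · simp [Function.update_of_ne hji]
      · intro f hf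
        simp only [Finset.mem_filter, mem_weakCompositions] at hf
        obtain ⟨hsum, hpos⟩ := hf
        have hfe : f = Function.update (Function.update f i (f i - 1)) i
            ((Function.update f i (f i - 1)) i + 1) := by
          funext j
          rcases eq_or_ne j i with rfl | hji
          · simp; omega
          · simp [Function.update_of_ne hji]
        conv_lhs => rw [hfe]
        exact key _
    rw [Finset.sum_congr rfl fun i _ => step3 i, Finset.sum_comm]
    have step4 : ∀ g ∈ weakCompositions n p,
        ∑ i, (Nat.factorial n : ℝ) / (∏ j, (Nat.factorial (g j) : ℝ)) *
            (∏ j, risingFac (a j) (g j)) * (a i + g i) =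
          ((Nat.factorial n : ℝ) / (∏ j, (Nat.factorial (g j) : ℝ)) *
            (∏ j, risingFac (a j) (g j))) * ((∑ j, a j) + n) := by
      intro g hg
      rw [← Finset.mul_sum]
      congr 1
      rw [Finset.sum_add_distrib, ← Nat.cast_sum, mem_weakCompositions.mp hg]
    rw [Finset.sum_congr rfl step4, ← Finset.sum_mul, ih, risingFac_succ]

/-- Multinomial-type identity for rising factorials:
`∑_{n_1+⋯+n_p=n} (n!/∏ n_j!) ∏_j (z_j)_{n_j+m_j−1}
  = (∏_j (z_j)_{m_j−1}) · (m + ∑_j z_j − p)_n`. -/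
theorem sum_multinomial_rising_shifted (p : ℕ) (hp : 1 ≤ p) (z : Fin p → ℝ)
    (mv : Fin p → ℕ) (hmv : ∀ j, 1 ≤ mv j) (n : ℕ) :
    ∑ f ∈ weakCompositions n p,
        (Nat.factorial n : ℝ) / (∏ j, (Nat.factorial (f j) : ℝ)) *
          ∏ j, risingFac (z j) (f j + mv j - 1) =
      (∏ j, risingFac (z j) (mv j - 1)) *
        risingFac (((∑ j, mv j : ℕ) : ℝ) + (∑ j, z j) - (p : ℝ)) n := by
  set a : Fin p → ℝ := fun j => z j + ((mv j - 1 : ℕ) : ℝ) with ha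
  have h1 : ∀ f : Fin p → ℕ,
      ∏ j, risingFac (z j) (f j + mv j - 1) =
        (∏ j, risingFac (z j) (mv j - 1)) * ∏ j, risingFac (a j) (f j) := by
    intro f
    rw [← Finset.prod_mul_distrib]
    refine Finset.prod_congr rfl fun j _ => ?_
    have he : f j + mv j - 1 = (mv j - 1) + f j := by have := hmv j; omega
    rw [he, risingFac_add, ha]
  have hA : (∑ j, a j) = ((∑ j, mv j : ℕ) : ℝ) + (∑ j, z j) - (p : ℝ) := by
    have hc : ∀ j : Fin p, ((mv j - 1 : ℕ) : ℝ) = (mv j : ℝ) - 1 := by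
      intro j
      rw [Nat.cast_sub (hmv j)]
      norm_num
    simp only [ha, hc, Finset.sum_add_distrib, Finset.sum_sub_distrib]
    push_cast
    simp [Finset.card_univ]
    ring
  calc ∑ f ∈ weakCompositions n p,
          (Nat.factorial n : ℝ) / (∏ j, (Nat.factorial (f j) : ℝ)) *
            ∏ j, risingFac (z j) (f j + mv j - 1)
      = ∑ f ∈ weakCompositions n p, (∏ j, risingFac (z j) (mv j - 1)) *
          ((Nat.factorial n : ℝ) / (∏ j, (Nat.factorial (f j) : ℝ)) *
            ∏ j, risingFac (a j) (f j)) := by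
        refine Finset.sum_congr rfl fun f _ => ?_
        rw [h1, mul_left_comm]
    _ = (∏ j, risingFac (z j) (mv j - 1)) *
        risingFac (((∑ j, mv j : ℕ) : ℝ) + (∑ j, z j) - (p : ℝ)) n := by
        rw [← Finset.mul_sum, core p a n, hA]
end
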